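/- Let 0 < α < 1, c ∈ ℝ, and h > 0. The Caputo fractional derivative of order α with fixed memory length h of f(s) = (s − c)², namely (2/Γ(1−α))·[ (u − c)·h^(1−α)/(1−α) − h^(2−α)/(2−α) ], vanishes if and only if u = c + h(1−α)/(2−α); moreover this equilibrium point tends to the minimizer c of f as h → 0⁺. -/

import Mathlib

/-- The fixed-memory-length Caputo derivative of order `α ∈ (0,1)` of `f s = (s - c)^2`,
namely `(2/Γ(1-α)) [ (u - c) h^(1-α)/(1-α) - h^(2-α)/(2-α) ]`, vanishes iff
`u = c + h (1-α)/(2-α)`, and this equilibrium point tends to the minimizer `c` as `h → 0⁺`. -/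
theorem caputo_fixed_memory_zero_iff (α c : ℝ) (hα0 : 0 < α) (hα1 : α < 1) :
    (∀ h : ℝ, 0 < h → ∀ u : ℝ,
      ((2 / Real.Gamma (1 - α)) *
          ((u - c) * h ^ (1 - α) / (1 - α) - h ^ (2 - α) / (2 - α)) = 0
        ↔ u = c + h * (1 - α) / (2 - α))) ∧
    Filter.Tendsto (fun h : ℝ => c + h * (1 - α) / (2 - α))
      (nhdsWithin 0 (Set.Ioi 0)) (nhds c) := by
  have h1α : (0:ℝ) < 1 - α := by linarith
  have h2α : (0:ℝ) < 2 - α := by linarith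
  have hΓ : Real.Gamma (1 - α) ≠ 0 := (Real.Gamma_pos_of_pos h1α).ne'
  constructor
  · intro h hh u
    have hp : (0:ℝ) < h ^ (1 - α) := Real.rpow_pos_of_pos hh _
    have h2 : h ^ (2 - α) = h ^ (1 - α) * h := by
      rw [show (2:ℝ) - α = (1 - α) + 1 by ring, Real.rpow_add hh, Real.rpow_one]
    constructor
    · intro heq
      have h2ne : (2 / Real.Gamma (1 - α)) ≠ 0 := by
        simp [hΓ]
      have := (mul_eq_zero.mp heq).resolve_left h2ne
      have key : (u - c) * h ^ (1 - α) / (1 - α) = h ^ (2 - α) / (2 - α) :=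
        sub_eq_zero.mp this
      rw [h2] at key
      field_simp at key
      have hne : h ^ (1 - α) * (2 - α) ≠ 0 := by positivity
      have key2 : (u - c) * (h ^ (1 - α) * (2 - α)) =
          (h * (1 - α) / (2 - α)) * (h ^ (1 - α) * (2 - α)) := by
        field_simp
        linear_combination key
      have := mul_right_cancel₀ hne key2
      linarith
    · intro hu
      subst hu
      rw [h2]
      have : (c + h * (1 - α) / (2 - α) - c) = h * (1 - α) / (2 - α) := by ring
      rw [this]
      field_simp
      ring
  · have hc : Continuous (fun h : ℝ => c + h * (1 - α) / (2 - α)) := by continuity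
    have h0 := (hc.tendsto 0).mono_left (nhdsWithin_le_nhds (s := Set.Ioi (0:ℝ)))
    simpa using h0
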